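/- For a symmetric matrix A with ρ(A) < 1 and T ≥ 2(m+2), the bias term h_m(T) of the estimator Ŝ_m(T) satisfies ‖h_m(T)‖_max ≤ 8σ² / (T (1 − ρ(A)²)²), and in particular h_m(T) = O(1/T) as T → ∞. -/

import Mathlib

open Matrix

section aux

variable {n : Type*} [Fintype n] [DecidableEq n]

private lemma myconj_mul (U : Matrix n n ℝ) (h1 : star U * U = 1) (v w : n → ℝ) :
    (U * diagonal v * star U) * (U * diagonal w * star U)
      = U * diagonal (v * w) * star U := by
  calc U * diagonal v * star U * (U * diagonal w * star U)
      = U * diagonal v * (star U * U) * (diagonal w * star U) := by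
        simp only [Matrix.mul_assoc]
    _ = U * (diagonal v * diagonal w) * star U := by
        rw [h1, Matrix.mul_one]; simp only [Matrix.mul_assoc]
    _ = U * diagonal (v * w) * star U := by rw [diagonal_mul_diagonal]; rfl

private lemma myconj_one (U : Matrix n n ℝ) (h2 : U * star U = 1) :
    U * diagonal (1 : n → ℝ) * star U = 1 := by
  have hd : diagonal (1 : n → ℝ) = (1 : Matrix n n ℝ) := diagonal_one
  rw [hd, Matrix.mul_one, h2]

private lemma myconj_pow (U : Matrix n n ℝ) (h1 : star U * U = 1) (h2 : U * star U = 1)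
    (v : n → ℝ) (k : ℕ) :
    (U * diagonal v * star U) ^ k = U * diagonal (v ^ k) * star U := by
  induction k with
  | zero => simp [myconj_one U h2, h2]
  | succ k ih => rw [pow_succ, ih, myconj_mul U h1, pow_succ]

private lemma myconj_sub (U : Matrix n n ℝ) (v w : n → ℝ) :
    (U * diagonal v * star U) - (U * diagonal w * star U)
      = U * diagonal (v - w) * star U := by
  have hd : diagonal (v - w) = diagonal v - diagonal w := (diagonal_sub v w).symm
  rw [hd, Matrix.mul_sub, Matrix.sub_mul]

private lemma myconj_smul (U : Matrix n n ℝ) (c : ℝ) (v : n → ℝ) :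
    c • (U * diagonal v * star U) = U * diagonal (c • v) * star U := by
  simp only [diagonal_smul, Matrix.mul_smul, Matrix.smul_mul]

private lemma myconj_inv (U : Matrix n n ℝ) (h1 : star U * U = 1) (h2 : U * star U = 1)
    (v : n → ℝ) (hv : ∀ k, v k ≠ 0) :
    (U * diagonal v * star U)⁻¹ = U * diagonal v⁻¹ * star U := by
  apply Matrix.inv_eq_right_inv
  rw [myconj_mul U h1]
  have : v * v⁻¹ = 1 := by
    funext k; simp [mul_inv_cancel₀ (hv k)]
  rw [this, myconj_one U h2]

private lemma entry_bound (U : Matrix n n ℝ) (h2 : U * star U = 1)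
    (w : n → ℝ) (C : ℝ) (hw : ∀ k, |w k| ≤ C) (i j : n) :
    |(U * diagonal w * star U) i j| ≤ C := by
  have hC : 0 ≤ C := le_trans (abs_nonneg _) (hw i)
  have hrow : ∀ a : n, ∑ k, U a k ^ 2 = 1 := by
    intro a
    have := congrFun (congrFun h2 a) a
    simpa [Matrix.mul_apply, Matrix.one_apply, Matrix.star_apply, sq] using this
  have he : (U * diagonal w * star U) i j = ∑ k, U i k * w k * U j k := by
    rw [Matrix.mul_apply]
    refine Finset.sum_congr rfl fun k _ => ?_
    rw [Matrix.mul_diagonal, Matrix.star_apply, star_trivial]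
  have hS : ∑ k, |U i k| * |U j k| ≤ 1 := by
    have cs := Finset.sum_mul_sq_le_sq_mul_sq Finset.univ (fun k => |U i k|) (fun k => |U j k|)
    simp only [sq_abs] at cs
    rw [hrow i, hrow j, mul_one] at cs
    have hnn : 0 ≤ ∑ k, |U i k| * |U j k| :=
      Finset.sum_nonneg fun k _ => mul_nonneg (abs_nonneg _) (abs_nonneg _)
    nlinarith [cs, hnn]
  rw [he]
  calc |∑ k, U i k * w k * U j k| ≤ ∑ k, |U i k * w k * U j k| :=
        Finset.abs_sum_le_sum_abs _ _
    _ ≤ ∑ k, C * (|U i k| * |U j k|) := by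
        refine Finset.sum_le_sum fun k _ => ?_
        rw [abs_mul, abs_mul]
        have h1 : |U i k| * |w k| * |U j k| = |w k| * (|U i k| * |U j k|) := by ring
        rw [h1]
        exact mul_le_mul_of_nonneg_right (hw k)
          (mul_nonneg (abs_nonneg _) (abs_nonneg _))
    _ = C * ∑ k, |U i k| * |U j k| := by rw [← Finset.mul_sum]
    _ ≤ C * 1 := mul_le_mul_of_nonneg_left hS hC
    _ = C := mul_one C

private lemma scalar_term_bound (r x : ℝ) (hx : |x| ≤ r) (hr1 : r < 1) (hr0 : 0 ≤ r)
    (c : ℝ) (hc0 : 0 ≤ c) (e k : ℕ) :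
    |c * (x ^ k * (x ^ e - 1) * ((1 - x ^ 2)⁻¹ * (1 - x ^ 2)⁻¹))|
      ≤ c * 2 * ((1 - r ^ 2)⁻¹ * (1 - r ^ 2)⁻¹) := by
  have hx1 : |x| ≤ 1 := hx.trans hr1.le
  have hxr : x ^ 2 ≤ r ^ 2 := by
    rw [← sq_abs]; exact pow_le_pow_left₀ (abs_nonneg x) hx 2
  have hr2 : (0:ℝ) < 1 - r ^ 2 := by nlinarith
  have hx2 : (0:ℝ) < 1 - x ^ 2 := by linarith
  have hinv : (1 - x ^ 2)⁻¹ ≤ (1 - r ^ 2)⁻¹ := by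
    apply inv_anti₀ hr2; linarith
  have hinv0 : (0:ℝ) ≤ (1 - x ^ 2)⁻¹ := inv_nonneg.mpr hx2.le
  have hk : |x ^ k| ≤ 1 := by
    rw [abs_pow]; exact pow_le_one₀ (abs_nonneg x) hx1
  have he2 : |x ^ e - 1| ≤ 2 := by
    have := abs_sub (x ^ e) 1
    have : |x ^ e| ≤ 1 := by rw [abs_pow]; exact pow_le_one₀ (abs_nonneg x) hx1
    calc |x ^ e - 1| ≤ |x ^ e| + |(1:ℝ)| := abs_sub _ _
      _ ≤ 1 + 1 := by rw [abs_one]; linarith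
      _ = 2 := by norm_num
  have habs : |c * (x ^ k * (x ^ e - 1) * ((1 - x ^ 2)⁻¹ * (1 - x ^ 2)⁻¹))|
      = c * (|x ^ k| * |x ^ e - 1| * ((1 - x ^ 2)⁻¹ * (1 - x ^ 2)⁻¹)) := by
    rw [abs_mul, abs_mul, abs_mul, abs_of_nonneg hc0,
      abs_of_nonneg (mul_nonneg hinv0 hinv0)]
  rw [habs]
  have : |x ^ k| * |x ^ e - 1| * ((1 - x ^ 2)⁻¹ * (1 - x ^ 2)⁻¹)
      ≤ 1 * 2 * ((1 - r ^ 2)⁻¹ * (1 - r ^ 2)⁻¹) := by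
    gcongr <;> first | exact abs_nonneg _ | positivity
  calc c * (|x ^ k| * |x ^ e - 1| * ((1 - x ^ 2)⁻¹ * (1 - x ^ 2)⁻¹))
      ≤ c * (1 * 2 * ((1 - r ^ 2)⁻¹ * (1 - r ^ 2)⁻¹)) :=
        mul_le_mul_of_nonneg_left this hc0
    _ = c * 2 * ((1 - r ^ 2)⁻¹ * (1 - r ^ 2)⁻¹) := by ring

end aux

/-- For `A` symmetric with spectral radius `ρ(A) ≤ r < 1` and `T ≥ 2(m+2)`,
the bias term `h_m(T)` satisfies `‖h_m(T)‖_max ≤ 8σ²/(T(1 − ρ(A)²)²)`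
(in particular `h_m(T) = O(1/T)`). -/
theorem stmt5 {N : ℕ} (A : Matrix (Fin N) (Fin N) ℝ) (hA : A.IsSymm)
    (r : ℝ) (hr : ∀ μ ∈ spectrum ℝ A, |μ| ≤ r) (hr1 : r < 1) (hr0 : 0 ≤ r)
    (σ : ℝ) (m T : ℕ) (hT : 2 * (m + 2) ≤ T)
    (h : Matrix (Fin N) (Fin N) ℝ)
    (hh : h = (σ ^ 2 / (T - m : ℝ)) •
        (A ^ m * (A ^ (2 * (T - m)) - 1) * ((1 - A ^ 2)⁻¹ * (1 - A ^ 2)⁻¹))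
      - (σ ^ 2 / (T - m - 2 : ℝ)) •
        (A ^ (m + 2) * (A ^ (2 * (T - m - 2)) - 1) * ((1 - A ^ 2)⁻¹ * (1 - A ^ 2)⁻¹))) :
    ∀ i j : Fin N, |h i j| ≤ 8 * σ ^ 2 / (T * (1 - r ^ 2) ^ 2) := by
  intro i j
  have hA' : A.IsHermitian := by
    rw [Matrix.IsHermitian, Matrix.conjTranspose_eq_transpose_of_trivial]; exact hA
  set U : Matrix (Fin N) (Fin N) ℝ := (hA'.eigenvectorUnitary : Matrix (Fin N) (Fin N) ℝ) with hUdef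
  have h1 : star U * U = 1 := Matrix.mem_unitaryGroup_iff'.mp hA'.eigenvectorUnitary.2
  have h2 : U * star U = 1 := Matrix.mem_unitaryGroup_iff.mp hA'.eigenvectorUnitary.2
  set μ : Fin N → ℝ := hA'.eigenvalues with hμdef
  have hspec : A = U * diagonal μ * star U := by
    have := hA'.spectral_theorem
    simpa using this
  have hμr : ∀ k, |μ k| ≤ r := fun k => hr _ (hA'.eigenvalues_mem_spectrum_real k)
  -- the diagonal function
  set w : Fin N → ℝ := (σ ^ 2 / (T - m : ℝ)) •
        (μ ^ m * (μ ^ (2 * (T - m)) - 1) * ((1 - μ ^ 2)⁻¹ * (1 - μ ^ 2)⁻¹))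
      - (σ ^ 2 / (T - m - 2 : ℝ)) •
        (μ ^ (m + 2) * (μ ^ (2 * (T - m - 2)) - 1) * ((1 - μ ^ 2)⁻¹ * (1 - μ ^ 2)⁻¹))
    with hwdef
  have hv : ∀ k, ((1 : Fin N → ℝ) - μ ^ 2) k ≠ 0 := by
    intro k
    have hxr : μ k ^ 2 ≤ r ^ 2 := by
      rw [← sq_abs]; exact pow_le_pow_left₀ (abs_nonneg _) (hμr k) 2
    have : (0:ℝ) < 1 - μ k ^ 2 := by nlinarith
    simpa [Pi.sub_apply, Pi.pow_apply] using this.ne'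
  have eInv : (1 - A ^ 2)⁻¹ = U * diagonal ((1 - μ ^ 2)⁻¹) * star U := by
    rw [hspec, myconj_pow U h1 h2, ← myconj_one U h2, myconj_sub U]
    exact myconj_inv U h1 h2 _ hv
  have hw : h = U * diagonal w * star U := by
    rw [hh, eInv, hspec]
    simp only [myconj_pow U h1 h2, ← myconj_one U h2, myconj_sub U, myconj_mul U h1,
      myconj_smul U]
    rfl
  rw [hw]
  -- now bound
  have hTpos : (0:ℝ) < T := by
    have : (4:ℕ) ≤ T := le_trans (by omega) hT
    exact_mod_cast lt_of_lt_of_le (by norm_num) this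
  have hTm : (T:ℝ) / 2 ≤ (T:ℝ) - m := by
    have : (2*(m+2) : ℝ) ≤ T := by exact_mod_cast hT
    linarith
  have hTm2 : (T:ℝ) / 2 ≤ (T:ℝ) - m - 2 := by
    have : (2*(m+2) : ℝ) ≤ T := by exact_mod_cast hT
    linarith
  have hc1 : σ ^ 2 / (T - m : ℝ) ≤ 2 * σ ^ 2 / T := by
    have : σ ^ 2 / (T - m : ℝ) ≤ σ ^ 2 / ((T:ℝ)/2) := by
      apply div_le_div_of_nonneg_left (sq_nonneg σ) (by linarith) hTm
    calc σ ^ 2 / (T - m : ℝ) ≤ σ ^ 2 / ((T:ℝ)/2) := this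
      _ = 2 * σ ^ 2 / T := by field_simp
  have hc2 : σ ^ 2 / (T - m - 2 : ℝ) ≤ 2 * σ ^ 2 / T := by
    have : σ ^ 2 / (T - m - 2 : ℝ) ≤ σ ^ 2 / ((T:ℝ)/2) := by
      apply div_le_div_of_nonneg_left (sq_nonneg σ) (by linarith) hTm2
    calc σ ^ 2 / (T - m - 2 : ℝ) ≤ σ ^ 2 / ((T:ℝ)/2) := this
      _ = 2 * σ ^ 2 / T := by field_simp
  have hc1' : 0 ≤ σ ^ 2 / (T - m : ℝ) := div_nonneg (sq_nonneg σ) (by linarith)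
  have hc2' : 0 ≤ σ ^ 2 / (T - m - 2 : ℝ) := div_nonneg (sq_nonneg σ) (by linarith)
  have hr2 : (0:ℝ) < 1 - r ^ 2 := by nlinarith
  apply entry_bound U h2 w _ _ i j
  intro k
  have hb1 := scalar_term_bound r (μ k) (hμr k) hr1 hr0 _ hc1' (2*(T-m)) m
  have hb2 := scalar_term_bound r (μ k) (hμr k) hr1 hr0 _ hc2' (2*(T-m-2)) (m+2)
  have hwk : w k = σ ^ 2 / (T - m : ℝ) *
        ((μ k) ^ m * ((μ k) ^ (2 * (T - m)) - 1) * ((1 - (μ k) ^ 2)⁻¹ * (1 - (μ k) ^ 2)⁻¹))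
      - σ ^ 2 / (T - m - 2 : ℝ) *
        ((μ k) ^ (m + 2) * ((μ k) ^ (2 * (T - m - 2)) - 1) *
          ((1 - (μ k) ^ 2)⁻¹ * (1 - (μ k) ^ 2)⁻¹)) := by
    simp [hwdef, Pi.smul_apply, Pi.sub_apply, Pi.mul_apply, Pi.pow_apply, Pi.inv_apply,
      Pi.one_apply, smul_eq_mul]
  rw [hwk]
  have htri := abs_sub
    (σ ^ 2 / (T - m : ℝ) *
        ((μ k) ^ m * ((μ k) ^ (2 * (T - m)) - 1) * ((1 - (μ k) ^ 2)⁻¹ * (1 - (μ k) ^ 2)⁻¹)))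
    (σ ^ 2 / (T - m - 2 : ℝ) *
        ((μ k) ^ (m + 2) * ((μ k) ^ (2 * (T - m - 2)) - 1) *
          ((1 - (μ k) ^ 2)⁻¹ * (1 - (μ k) ^ 2)⁻¹)))
  have hq : (0:ℝ) ≤ (1 - r ^ 2)⁻¹ * (1 - r ^ 2)⁻¹ := by positivity
  have hsum : σ ^ 2 / (T - m : ℝ) * 2 * ((1 - r ^ 2)⁻¹ * (1 - r ^ 2)⁻¹)
      + σ ^ 2 / (T - m - 2 : ℝ) * 2 * ((1 - r ^ 2)⁻¹ * (1 - r ^ 2)⁻¹)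
      ≤ 8 * σ ^ 2 / (T * (1 - r ^ 2) ^ 2) := by
    have key : σ ^ 2 / (T - m : ℝ) * 2 + σ ^ 2 / (T - m - 2 : ℝ) * 2
        ≤ 8 * σ ^ 2 / T := by
      have heq8 : 2 * σ ^ 2 / (T:ℝ) * 2 + 2 * σ ^ 2 / (T:ℝ) * 2 = 8 * σ ^ 2 / T := by
        ring
      linarith [hc1, hc2]
    have heq : 8 * σ ^ 2 / ((T:ℝ) * (1 - r ^ 2) ^ 2)
        = (8 * σ ^ 2 / T) * ((1 - r ^ 2)⁻¹ * (1 - r ^ 2)⁻¹) := by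
      simp only [div_eq_mul_inv, pow_two, mul_inv]
      ring
    rw [heq]
    calc σ ^ 2 / (T - m : ℝ) * 2 * ((1 - r ^ 2)⁻¹ * (1 - r ^ 2)⁻¹)
        + σ ^ 2 / (T - m - 2 : ℝ) * 2 * ((1 - r ^ 2)⁻¹ * (1 - r ^ 2)⁻¹)
        = (σ ^ 2 / (T - m : ℝ) * 2 + σ ^ 2 / (T - m - 2 : ℝ) * 2)
            * ((1 - r ^ 2)⁻¹ * (1 - r ^ 2)⁻¹) := by ring
      _ ≤ (8 * σ ^ 2 / T) * ((1 - r ^ 2)⁻¹ * (1 - r ^ 2)⁻¹) :=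
          mul_le_mul_of_nonneg_right key hq
  calc |_| ≤ _ := htri
    _ ≤ _ := add_le_add hb1 hb2
    _ ≤ _ := hsum
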